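/- Let ω : ℝ → ℝ be differentiable with ω' > 0, and U : ℝ → ℝ be C² convex. Suppose reals ũⱼ (j = 1,…,N) and u⁺ and weights αⱼ ≥ 0 with Σαⱼ = 1 satisfy ω(u⁺) = Σⱼ αⱼ ω(ũⱼ). Define Ω(u) = ∫₀ᵘ U'(s)ω'(s) ds. Then Ω(u⁺) ≤ Σⱼ αⱼ Ω(ũⱼ). -/

import Mathlib

/-- Convex decomposition inequality for entropy fluxes: if ω(u⁺) is a convex
combination of the ω(ũⱼ), then the same inequality holds for Ω with Ω' = U'ω'. -/
theorem stmt10 (ω ω' U : ℝ → ℝ)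
    (hω : ∀ x, HasDerivAt ω (ω' x) x) (hω' : ∀ x, 0 < ω' x)
    (hU : ContDiff ℝ 2 U) (hUconv : ConvexOn ℝ Set.univ U)
    (N : ℕ) (α : Fin N → ℝ) (hα : ∀ j, 0 ≤ α j) (hsum : ∑ j, α j = 1)
    (ut : Fin N → ℝ) (uplus : ℝ)
    (hcomb : ω uplus = ∑ j, α j * ω (ut j)) :
    (∫ s in (0 : ℝ)..uplus, deriv U s * ω' s)
      ≤ ∑ j, α j * ∫ s in (0 : ℝ)..(ut j), deriv U s * ω' s := by
  have hωcont : Continuous ω :=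
    Differentiable.continuous (fun x => (hω x).differentiableAt)
  have hU'cont : Continuous (deriv U) := hU.continuous_deriv one_le_two
  have hU'mono : Monotone (deriv U) := by
    have := hUconv.monotoneOn_deriv
      (fun x _ => (hU.differentiable two_ne_zero).differentiableAt)
    exact monotoneOn_univ.mp this
  -- integrability of ω' on any interval
  have hIω' : ∀ a b : ℝ, IntervalIntegrable ω' MeasureTheory.volume a b := fun a b =>
    intervalIntegral.intervalIntegrable_deriv_of_nonneg hωcont.continuousOn
      (fun x _ => hω x) (fun x _ => (hω' x).le)
  -- FTC for ω'
  have hFTC : ∀ a b : ℝ, (∫ s in a..b, ω' s) = ω b - ω a := fun a b =>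
    intervalIntegral.integral_eq_sub_of_hasDerivAt (fun x _ => hω x) (hIω' a b)
  -- integrability of deriv U * ω'
  have hI : ∀ a b : ℝ, IntervalIntegrable (fun s => deriv U s * ω' s)
      MeasureTheory.volume a b := fun a b =>
    (hIω' a b).continuousOn_mul hU'cont.continuousOn
  -- key inequality : ∫_a^b U' ω' ≥ U'(a) (ω b - ω a)
  have key : ∀ a b : ℝ, deriv U a * (ω b - ω a) ≤ ∫ s in a..b, deriv U s * ω' s := by
    intro a b
    rcases le_total a b with hab | hab
    · rw [← hFTC a b, ← intervalIntegral.integral_const_mul]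
      refine intervalIntegral.integral_mono_on hab
        ((hIω' a b).const_mul _) (hI a b) (fun s hs => ?_)
      exact mul_le_mul_of_nonneg_right (hU'mono hs.1) (hω' s).le
    · rw [← hFTC a b, ← intervalIntegral.integral_const_mul,
        intervalIntegral.integral_symm b a, intervalIntegral.integral_symm b a
          (f := fun s => deriv U s * ω' s), neg_le_neg_iff]
      refine intervalIntegral.integral_mono_on hab
        (hI b a) ((hIω' b a).const_mul _) (fun s hs => ?_)
      exact mul_le_mul_of_nonneg_right (hU'mono hs.2) (hω' s).le
  -- decompose ∫_0^{ut j} = ∫_0^{uplus} + ∫_{uplus}^{ut j}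
  have hsplit : ∀ j, (∫ s in (0:ℝ)..(ut j), deriv U s * ω' s)
      = (∫ s in (0:ℝ)..uplus, deriv U s * ω' s)
        + ∫ s in uplus..(ut j), deriv U s * ω' s := fun j =>
    (intervalIntegral.integral_add_adjacent_intervals (hI 0 uplus) (hI uplus (ut j))).symm
  calc (∫ s in (0:ℝ)..uplus, deriv U s * ω' s)
      = (∫ s in (0:ℝ)..uplus, deriv U s * ω' s)
          + deriv U uplus * ((∑ j, α j * ω (ut j)) - ω uplus) := by
        rw [← hcomb]; ring
    _ = (∫ s in (0:ℝ)..uplus, deriv U s * ω' s)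
          + ∑ j, α j * (deriv U uplus * (ω (ut j) - ω uplus)) := by
        congr 1
        rw [show (∑ j, α j * ω (ut j)) - ω uplus
            = ∑ j, α j * (ω (ut j) - ω uplus) by
          simp only [mul_sub, Finset.sum_sub_distrib, ← Finset.sum_mul, hsum, one_mul]]
        rw [Finset.mul_sum]
        exact Finset.sum_congr rfl (fun j _ => by ring)
    _ ≤ (∫ s in (0:ℝ)..uplus, deriv U s * ω' s)
          + ∑ j, α j * ∫ s in uplus..(ut j), deriv U s * ω' s := by
        gcongr with j hj
        · exact hα j
        · exact key uplus (ut j)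
    _ = ∑ j, α j * ∫ s in (0:ℝ)..(ut j), deriv U s * ω' s := by
        simp only [hsplit, mul_add, Finset.sum_add_distrib, ← Finset.sum_mul, hsum, one_mul]
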